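/- The function F_4^*(t,r) = 1/(5r^2 + 3(T-t)^2)^3 solves the linearized equation (∂_t^2 - ∂_r^2 - (6/r)∂_r)u(t,r) = 2 u_T^*(t,r) u(t,r) for all (t,r) ≠ (T,0), r > 0. -/

import Mathlib

private lemma hasDerivAt_Dt (T r t : ℝ) :
    HasDerivAt (fun t' => 5 * r ^ 2 + 3 * (T - t') ^ 2) (-(6 * (T - t))) t := by
  have h1 : HasDerivAt (fun t' : ℝ => T - t') (-1) t := by
    simpa using (hasDerivAt_id t).const_sub T
  have h2 := (h1.pow 2).const_mul 3
  have h3 := h2.const_add (5 * r ^ 2)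
  refine h3.congr_deriv ?_
  push_cast
  ring

private lemma hasDerivAt_Dr (T t r : ℝ) :
    HasDerivAt (fun r' => 5 * r' ^ 2 + 3 * (T - t) ^ 2) (10 * r) r := by
  have h1 := ((hasDerivAt_pow 2 r).const_mul 5).add_const (3 * (T - t) ^ 2)
  refine h1.congr_deriv ?_
  push_cast
  ring

private lemma hasDerivAt_one_div_cube {g : ℝ → ℝ} {g' x : ℝ} (h : HasDerivAt g g' x)
    (hx : g x ≠ 0) :
    HasDerivAt (fun y => 1 / (g y) ^ 3) (-3 * g' / (g x) ^ 4) x := by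
  have h1 := (h.pow 3).inv (pow_ne_zero 3 hx)
  have : (fun y => 1 / (g y) ^ 3) = fun y => ((g y) ^ 3)⁻¹ := by
    funext y; rw [one_div]
  rw [this]
  refine h1.congr_deriv ?_
  rw [Pi.pow_apply]
  field_simp
  ring

/-- `F_4^*(t,r) = 1/(5r² + 3(T-t)²)³` solves the equation obtained by linearizing the
radial quadratic wave equation in `d = 7` around `u_T^*`. -/
theorem F4star_solves_linearized (T : ℝ) (hT : 0 < T) (uStar F : ℝ → ℝ → ℝ)
    (huStar : ∀ t r : ℝ, uStar t r = 24 * (21 * (T - t) ^ 2 - 5 * r ^ 2) /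
      (3 * (T - t) ^ 2 + 5 * r ^ 2) ^ 2)
    (hF : ∀ t r : ℝ, F t r = 1 / (5 * r ^ 2 + 3 * (T - t) ^ 2) ^ 3) :
    ∀ t r : ℝ, 0 < r → (t, r) ≠ (T, 0) →
      deriv (deriv (fun t' => F t' r)) t - deriv (deriv (fun r' => F t r')) r
        - (6 / r) * deriv (fun r' => F t r') r = 2 * uStar t r * F t r := by
  intro t r hr _
  have hD : ∀ s : ℝ, (0:ℝ) < 5 * r ^ 2 + 3 * (T - s) ^ 2 := by
    intro s
    have : (0:ℝ) < 5 * r ^ 2 := by positivity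
    nlinarith [sq_nonneg (T - s)]
  -- time derivatives
  have hfun_t : (fun t' => F t' r) = fun t' => 1 / (5 * r ^ 2 + 3 * (T - t') ^ 2) ^ 3 :=
    funext fun t' => hF t' r
  have key1 : deriv (fun t' => F t' r)
      = fun s => 18 * (T - s) / (5 * r ^ 2 + 3 * (T - s) ^ 2) ^ 4 := by
    funext s
    rw [hfun_t]
    have h := hasDerivAt_one_div_cube (hasDerivAt_Dt T r s) (hD s).ne'
    rw [h.deriv]
    ring
  have hDt2 : HasDerivAt (fun s => 18 * (T - s) / (5 * r ^ 2 + 3 * (T - s) ^ 2) ^ 4)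
      ((-18 * (5 * r ^ 2 + 3 * (T - t) ^ 2) + 18 * (T - t) * (24 * (T - t)))
        / (5 * r ^ 2 + 3 * (T - t) ^ 2) ^ 5) t := by
    have hnum : HasDerivAt (fun s : ℝ => 18 * (T - s)) (-18) t := by
      have : HasDerivAt (fun s : ℝ => T - s) (-1) t := by
        simpa using (hasDerivAt_id t).const_sub T
      simpa using this.const_mul 18
    have hden : HasDerivAt (fun s => (5 * r ^ 2 + 3 * (T - s) ^ 2) ^ 4)
        ((4 : ℕ) * (5 * r ^ 2 + 3 * (T - t) ^ 2) ^ 3 * (-(6 * (T - t)))) t :=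
      (hasDerivAt_Dt T r t).pow 4
    have hden0 : (5 * r ^ 2 + 3 * (T - t) ^ 2) ^ 4 ≠ 0 := pow_ne_zero _ (hD t).ne'
    have h := hnum.div hden hden0
    refine h.congr_deriv ?_
    have hD0 : (5 * r ^ 2 + 3 * (T - t) ^ 2) ≠ 0 := (hD t).ne'
    field_simp
    ring
  -- radial derivatives
  have hDr : ∀ s : ℝ, s ≠ 0 → (0:ℝ) < 5 * s ^ 2 + 3 * (T - t) ^ 2 := by
    intro s hs
    have : (0:ℝ) < 5 * s ^ 2 := by positivity
    nlinarith [sq_nonneg (T - t)]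
  have hderiv_r : ∀ s : ℝ, s ≠ 0 →
      deriv (fun r' => F t r') s = -30 * s / (5 * s ^ 2 + 3 * (T - t) ^ 2) ^ 4 := by
    intro s hs
    have hfun_r : (fun r' => F t r') = fun r' => 1 / (5 * r' ^ 2 + 3 * (T - t) ^ 2) ^ 3 :=
      funext fun r' => hF t r'
    rw [hfun_r]
    have h := hasDerivAt_one_div_cube (hasDerivAt_Dr T t s) (hDr s hs).ne'
    rw [h.deriv]
    ring
  have hev : deriv (fun r' => F t r') =ᶠ[nhds r]
      (fun s => -30 * s / (5 * s ^ 2 + 3 * (T - t) ^ 2) ^ 4) := by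
    filter_upwards [Ioi_mem_nhds hr] with s hs
    exact hderiv_r s (ne_of_gt hs)
  have key2 : deriv (deriv (fun r' => F t r')) r
      = deriv (fun s => -30 * s / (5 * s ^ 2 + 3 * (T - t) ^ 2) ^ 4) r := hev.deriv_eq
  have hDr2 : HasDerivAt (fun s => -30 * s / (5 * s ^ 2 + 3 * (T - t) ^ 2) ^ 4)
      ((-30 * (5 * r ^ 2 + 3 * (T - t) ^ 2) - (-30 * r) * (40 * r))
        / (5 * r ^ 2 + 3 * (T - t) ^ 2) ^ 5) r := by
    have hnum : HasDerivAt (fun s : ℝ => -30 * s) (-30) r := by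
      simpa using (hasDerivAt_id r).const_mul (-30 : ℝ)
    have hden : HasDerivAt (fun s => (5 * s ^ 2 + 3 * (T - t) ^ 2) ^ 4)
        ((4 : ℕ) * (5 * r ^ 2 + 3 * (T - t) ^ 2) ^ 3 * (10 * r)) r :=
      (hasDerivAt_Dr T t r).pow 4
    have hden0 : (5 * r ^ 2 + 3 * (T - t) ^ 2) ^ 4 ≠ 0 :=
      pow_ne_zero _ (hDr r hr.ne').ne'
    have h := hnum.div hden hden0
    refine h.congr_deriv ?_
    have hD0 : (5 * r ^ 2 + 3 * (T - t) ^ 2) ≠ 0 := (hDr r hr.ne').ne'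
    field_simp
    ring
  -- assemble
  rw [key1, hDt2.deriv, key2, hDr2.deriv, hderiv_r r hr.ne', huStar, hF]
  have hD0 : (5 * r ^ 2 + 3 * (T - t) ^ 2) ≠ 0 := (hD t).ne'
  have hD0' : (3 * (T - t) ^ 2 + 5 * r ^ 2) ≠ 0 := by
    intro h; apply hD0; linarith
  field_simp
  ring
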